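/- Let m ≥ 1 and suppose the Fibonacci sequence is defective mod m (some residue mod m never occurs among Fibonacci numbers). Then every integer sequence G satisfying G(n+2) = G(n) + G(n+1) with gcd(G(1), G(2)) = 1 is also defective mod m. -/
import Mathlib

/-- Any sequence satisfying the Fibonacci recurrence (for indices ≥ 1) is
purely periodic mod `m`. -/
lemma exists_period_of_fib_rec (m : ℕ) (hm : 1 ≤ m) (g : ℕ → ZMod m)
    (hg : ∀ n ≥ 1, g (n + 2) = g n + g (n + 1)) :
    ∃ p ≥ 1, ∀ n ≥ 1, g (n + p) = g n := by
  haveI : NeZero m := ⟨by omega⟩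
  set T : ZMod m × ZMod m → ZMod m × ZMod m := fun x => (x.2, x.1 + x.2) with hT
  set B : ZMod m × ZMod m → ZMod m × ZMod m := fun x => (x.2 - x.1, x.1) with hB
  set s : ℕ → ZMod m × ZMod m := fun n => (g n, g (n + 1)) with hs
  have hfwd : ∀ n ≥ 1, s (n + 1) = T (s n) := by
    intro n hn
    simp only [hs, hT]
    rw [hg n hn]
  have hTB : Function.LeftInverse B T := by
    intro x; simp [hT, hB]
  have hiterF : ∀ d, ∀ n ≥ 1, s (n + d) = T^[d] (s n) := by
    intro d
    induction d with
    | zero => simp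
    | succ d ih =>
      intro n hn
      have e : n + (d + 1) = (n + d) + 1 := by ring
      rw [e, hfwd (n + d) (by omega), ih n hn, Function.iterate_succ_apply']
  have hiterB : ∀ d, ∀ n ≥ 1, B^[d] (s (n + d)) = s n := by
    intro d n hn
    rw [hiterF d n hn]
    exact (hTB.iterate d) (s n)
  obtain ⟨i, j, hij, hsij⟩ := Finite.exists_ne_map_eq_of_infinite (fun n : ℕ => s (n + 1))
  -- wlog i < j
  rcases hij.lt_or_gt with hlt | hlt
  case _ =>
    refine ⟨j - i, by omega, ?_⟩
    intro n hn
    have key : s (n + i) = s (n + i + (j - i)) := by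
      have a1 : s (n + i) = T^[n - 1] (s (i + 1)) := by
        have e1 : n + i = (i + 1) + (n - 1) := by omega
        rw [e1]; exact hiterF (n - 1) (i + 1) (by omega)
      have a2 : s (n + i + (j - i)) = T^[n - 1] (s (j + 1)) := by
        have e2 : n + i + (j - i) = (j + 1) + (n - 1) := by omega
        rw [e2]; exact hiterF (n - 1) (j + 1) (by omega)
      rw [a1, a2, hsij]
    have h1 : B^[i] (s (n + i)) = s n := hiterB i n hn
    have h2 : B^[i] (s (n + (j - i) + i)) = s (n + (j - i)) := hiterB i (n + (j - i)) (by omega)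
    have e3 : n + (j - i) + i = n + i + (j - i) := by omega
    have : s (n + (j - i)) = s n := by
      rw [← h1, ← h2, e3, key]
    exact congrArg Prod.fst this
  case _ =>
    refine ⟨i - j, by omega, ?_⟩
    intro n hn
    have key : s (n + j) = s (n + j + (i - j)) := by
      have a1 : s (n + j) = T^[n - 1] (s (j + 1)) := by
        have e1 : n + j = (j + 1) + (n - 1) := by omega
        rw [e1]; exact hiterF (n - 1) (j + 1) (by omega)
      have a2 : s (n + j + (i - j)) = T^[n - 1] (s (i + 1)) := by
        have e2 : n + j + (i - j) = (i + 1) + (n - 1) := by omega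
        rw [e2]; exact hiterF (n - 1) (i + 1) (by omega)
      rw [a1, a2, ← hsij]
    have h1 : B^[j] (s (n + j)) = s n := hiterB j n hn
    have h2 : B^[j] (s (n + (i - j) + j)) = s (n + (i - j)) := hiterB j (n + (i - j)) (by omega)
    have e3 : n + (i - j) + j = n + j + (i - j) := by omega
    have : s (n + (i - j)) = s n := by
      rw [← h1, ← h2, e3, key]
    exact congrArg Prod.fst this

theorem fibonacci_defective_implies_gibonacci_defective
    (m : ℕ) (hm : 1 ≤ m)
    (F : ℕ → ℤ) (hF1 : F 1 = 1) (hF2 : F 2 = 1)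
    (hFrec : ∀ n ≥ 1, F (n + 2) = F n + F (n + 1))
    (hdef : ∃ r : ℤ, ∀ n ≥ 1, ¬ F n ≡ r [ZMOD (m : ℤ)])
    (G : ℕ → ℤ) (hab : Int.gcd (G 1) (G 2) = 1)
    (hrec : ∀ n ≥ 1, G (n + 2) = G n + G (n + 1)) :
    ∃ r : ℤ, ∀ n ≥ 1, ¬ G n ≡ r [ZMOD (m : ℤ)] := by
  haveI : NeZero m := ⟨by omega⟩
  set g : ℕ → ZMod m := fun n => ((G n : ℤ) : ZMod m) with hgdef
  have hgrec : ∀ n ≥ 1, g (n + 2) = g n + g (n + 1) := by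
    intro n hn
    simp only [hgdef]
    rw [hrec n hn]
    push_cast
    ring
  obtain ⟨p, hp1, hper⟩ := exists_period_of_fib_rec m hm g hgrec
  have hmult : ∀ t, ∀ n ≥ 1, g (n + t * p) = g n := by
    intro t
    induction t with
    | zero => simp
    | succ t ih =>
      intro n hn
      have e : n + (t + 1) * p = (n + t * p) + p := by ring
      rw [e, hper _ (by omega), ih n hn]
  obtain ⟨r, hr⟩ := hdef
  by_cases hz : ∃ k ≥ 1, g k = 0
  · obtain ⟨k, hk1, hk0⟩ := hz
    -- coprimality is preserved along the recurrence
    have hcop : ∀ n ≥ 1, IsCoprime (G n) (G (n + 1)) := by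
      intro n hn
      induction n, hn using Nat.le_induction with
      | base => exact Int.isCoprime_iff_gcd_eq_one.mpr hab
      | succ n hn ih =>
        rw [hrec n hn]
        have := (ih.symm).add_mul_left_right 1
        simpa using this
    have hm_dvd : (m : ℤ) ∣ G k := (ZMod.intCast_zmod_eq_zero_iff_dvd _ m).mp hk0
    have hcm : IsCoprime (G (k + 1)) ((m : ℤ)) :=
      ((hcop k hk1).symm).of_isCoprime_of_dvd_right hm_dvd
    obtain ⟨u, v, huv⟩ := hcm
    have hu : (u : ZMod m) * g (k + 1) = 1 := by
      have h := congrArg (fun z : ℤ => ((z : ZMod m))) huv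
      push_cast at h
      simpa [ZMod.natCast_self] using h
    have hclaim : ∀ j ≥ 1, g (k + j) = g (k + 1) * ((F j : ℤ) : ZMod m) ∧
        g (k + j + 1) = g (k + 1) * ((F (j + 1) : ℤ) : ZMod m) := by
      intro j hj
      induction j, hj using Nat.le_induction with
      | base =>
        constructor
        · rw [hF1]; simp
        · have e : k + 1 + 1 = k + 2 := by ring
          rw [e, hgrec k hk1, hk0, hF2]
          simp
      | succ j hj ih =>
        obtain ⟨ih1, ih2⟩ := ih
        constructor
        · have e : k + (j + 1) = k + j + 1 := by ring
          rw [e]; exact ih2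
        · have e : k + (j + 1) + 1 = (k + j) + 2 := by ring
          rw [e, hgrec (k + j) (by omega), ih1, ih2, hFrec j hj]
          push_cast
          ring
    refine ⟨G (k + 1) * r, ?_⟩
    intro n hn hcon
    have hc : g n = g (k + 1) * ((r : ℤ) : ZMod m) := by
      have h := (ZMod.intCast_eq_intCast_iff _ _ _).mpr hcon
      simp only [hgdef]
      rw [h]
      push_cast
      ring
    have hkp : k ≤ k * p := Nat.le_mul_of_pos_right k (by omega)
    set j := n + k * p - k with hjdef
    have hj1 : 1 ≤ j := by omega
    have e : n + k * p = k + j := by omega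
    have h1 : g (k + j) = g n := by rw [← e]; exact hmult k n hn
    have h2 := (hclaim j hj1).1
    have hcf : g (k + 1) * ((F j : ℤ) : ZMod m) = g (k + 1) * ((r : ℤ) : ZMod m) := by
      rw [← h2, h1, hc]
    have hFr : ((F j : ℤ) : ZMod m) = ((r : ℤ) : ZMod m) := by
      have h3 := congrArg (fun z => (u : ZMod m) * z) hcf
      simpa only [← mul_assoc, hu, one_mul] using h3
    exact hr j hj1 ((ZMod.intCast_eq_intCast_iff _ _ _).mp hFr)
  · refine ⟨0, ?_⟩
    intro n hn hcon
    refine hz ⟨n, hn, ?_⟩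
    have h := (ZMod.intCast_eq_intCast_iff _ _ _).mpr hcon
    simpa [hgdef] using h
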